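/- For every N ≥ 2, the characteristic polynomial of M_F(N) equals ∏_{k=0}^{N} (x − k)^{m_k}, where m_k denotes the number of partitions of N − k all of whose parts are at least 2 (so m_N = 1, m_{N−1} = 0, and m_k is the number of tuples (ξ_2, …, ξ_{N−k}) of nonnegative integers with Σ_{l≥2} l·ξ_l = N − k). In particular, the multiplicity of the eigenvalue k of M_F(N) equals m_k, and the eigenvalues N, N−2 and N−3 (when present) are simple. -/

import Mathlib

/-- `AddBox α μ` means that the Young diagram `μ` is obtained from the Young diagram `α`
by adding a single box; equivalently, `α` is obtained from `μ` by removing a box: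
the diagram of `α` is contained in the diagram of `μ` and `μ` has exactly one more cell. -/
def AddBox (α μ : YoungDiagram) : Prop :=
  α ≤ μ ∧ μ.card = α.card + 1

/-- `MoveBox μ ν` (written `μ/ν = □` in the paper): `μ ≠ ν` and some Young diagram can be
obtained from both `μ` and `ν` by removing a single box, i.e. `μ` is obtained from `ν`
by moving a single box. -/
def MoveBox (μ ν : YoungDiagram) : Prop :=
  μ ≠ ν ∧ ∃ α : YoungDiagram, AddBox α μ ∧ AddBox α ν

/-- `nBox μ` is the number `n_μ` of Young diagrams obtained from `μ` by removing a box. -/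
noncomputable def nBox (μ : YoungDiagram) : ℕ :=
  Nat.card {α : YoungDiagram // AddBox α μ}

/-- Partitions of `N` with at most `d` parts, identified with Young diagrams with `N` boxes
whose first column has height at most `d`. -/
abbrev PartLE (N d : ℕ) : Type :=
  {μ : YoungDiagram // μ.card = N ∧ μ.colLen 0 ≤ d}

instance : DecidableEq YoungDiagram := fun μ ν =>
  decidable_of_iff (μ.cells = ν.cells) (YoungDiagram.ext_iff).symm

theorem cell_lt_card {μ : YoungDiagram} {i j : ℕ} (h : (i, j) ∈ μ.cells) :
    i < μ.card ∧ j < μ.card := by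
  rw [YoungDiagram.mem_cells] at h
  constructor
  · have hsub : Finset.range (i + 1) ×ˢ ({j} : Finset ℕ) ⊆ μ.cells := by
      rintro ⟨a, b⟩ hab
      rw [Finset.mem_product, Finset.mem_range, Finset.mem_singleton] at hab
      rw [YoungDiagram.mem_cells]
      obtain ⟨h1, h2⟩ := hab
      subst h2
      exact μ.up_left_mem (Nat.lt_succ_iff.mp h1) le_rfl h
    have := Finset.card_le_card hsub
    simpa [YoungDiagram.card] using this
  · have hsub : ({i} : Finset ℕ) ×ˢ Finset.range (j + 1) ⊆ μ.cells := by
      rintro ⟨a, b⟩ hab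
      rw [Finset.mem_product, Finset.mem_range, Finset.mem_singleton] at hab
      rw [YoungDiagram.mem_cells]
      obtain ⟨h1, h2⟩ := hab
      subst h1
      exact μ.up_left_mem le_rfl (Nat.lt_succ_iff.mp h2) h
    have := Finset.card_le_card hsub
    simpa [YoungDiagram.card] using this

noncomputable instance (N d : ℕ) : Fintype (PartLE N d) := by
  apply Fintype.ofInjective
    (β := {s : Finset (ℕ × ℕ) // s ∈ (Finset.range N ×ˢ Finset.range N).powerset})
    (f := fun μ => ⟨μ.1.cells, by
      rw [Finset.mem_powerset]
      rintro ⟨i, j⟩ hc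
      have h := cell_lt_card hc
      rw [μ.2.1] at h
      simp only [Finset.mem_product, Finset.mem_range]
      exact h⟩)
  rintro ⟨μ, hμ⟩ ⟨ν, hν⟩ h
  simp only [Subtype.mk.injEq] at h ⊢
  exact YoungDiagram.ext h

open scoped Classical in
/-- The Teleportation Matrix `M_F^d(N)`, indexed by the partitions of `N` with at most
`d` parts: the diagonal entry at `μ` is `n_μ`, the off-diagonal entry at `(μ, ν)` is `1`
if `μ/ν = □` and `0` otherwise.  For `d ≥ N` this is the full matrix `M_F(N)`. -/
noncomputable def MF (N d : ℕ) : Matrix (PartLE N d) (PartLE N d) ℝ :=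
  fun μ ν => if μ = ν then (nBox μ.1 : ℝ) else if MoveBox μ.1 ν.1 then 1 else 0

open YoungDiagram in
theorem colLen0_le_card (μ : YoungDiagram) : μ.colLen 0 ≤ μ.card := by
  rcases Nat.eq_zero_or_pos (μ.colLen 0) with h | h
  · omega
  · have h1 : (μ.colLen 0 - 1, 0) ∈ μ := mem_iff_lt_colLen.mpr (by omega)
    have h2 := cell_lt_card ((μ.mem_cells _).mpr h1)
    omega

open YoungDiagram in
theorem lt_card_of_rowLen_pos {μ : YoungDiagram} {i : ℕ} (h : 0 < μ.rowLen i) :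
    i < μ.card := by
  have h1 : (i, 0) ∈ μ := mem_iff_lt_rowLen.mpr h
  exact (cell_lt_card ((μ.mem_cells _).mpr h1)).1

/-- `c` is a removable cell (corner) of `μ`. -/
def Rem (μ : YoungDiagram) (c : ℕ × ℕ) : Prop :=
  c ∈ μ ∧ (c.1 + 1, c.2) ∉ μ ∧ (c.1, c.2 + 1) ∉ μ

/-- `c` is an addable cell of `μ`. -/
def Addable (μ : YoungDiagram) (c : ℕ × ℕ) : Prop :=
  c ∉ μ ∧ (c.1 = 0 ∨ (c.1 - 1, c.2) ∈ μ) ∧ (c.2 = 0 ∨ (c.1, c.2 - 1) ∈ μ)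

open YoungDiagram in
theorem rem_iff {μ : YoungDiagram} {i j : ℕ} :
    Rem μ (i, j) ↔ j + 1 = μ.rowLen i ∧ μ.rowLen (i + 1) < μ.rowLen i := by
  constructor
  · rintro ⟨h1, h2, h3⟩
    rw [mem_iff_lt_rowLen] at h1 h2 h3
    simp only at h2 h3
    omega
  · rintro ⟨h1, h2⟩
    refine ⟨mem_iff_lt_rowLen.mpr (by omega), ?_, ?_⟩ <;>
      simp only [mem_iff_lt_rowLen] <;> omega

open YoungDiagram in
theorem addable_iff {μ : YoungDiagram} {i j : ℕ} :
    Addable μ (i, j) ↔ j = μ.rowLen i ∧ (i = 0 ∨ μ.rowLen i < μ.rowLen (i - 1)) := by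
  constructor
  · rintro ⟨h1, h2, h3⟩
    rw [mem_iff_lt_rowLen] at h1
    simp only at h2 h3
    constructor
    · rcases h3 with h3 | h3
      · subst h3; omega
      · rw [mem_iff_lt_rowLen] at h3; omega
    · rcases h2 with h2 | h2
      · exact Or.inl h2
      · rw [mem_iff_lt_rowLen] at h2; right; omega
  · rintro ⟨h1, h2⟩
    refine ⟨by rw [mem_iff_lt_rowLen]; omega, ?_, ?_⟩ <;> dsimp only
    · rcases h2 with h2 | h2
      · exact Or.inl h2
      · right; rw [mem_iff_lt_rowLen]; omega
    · rcases Nat.eq_zero_or_pos j with hj | hj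
      · exact Or.inl hj
      · right; rw [mem_iff_lt_rowLen]; omega

/-- Insert an addable cell into a Young diagram. -/
def insertCell (μ : YoungDiagram) (c : ℕ × ℕ) (h : Addable μ c) : YoungDiagram where
  cells := insert c μ.cells
  isLowerSet := by
    rintro ⟨x, y⟩ ⟨a, b⟩ hle hmem
    obtain ⟨hc1, hc2, hc3⟩ := h
    simp only [Finset.coe_insert, Set.mem_insert_iff, YoungDiagram.mem_cells] at hmem ⊢
    obtain ⟨h1, h2⟩ : a ≤ x ∧ b ≤ y := hle
    rcases hmem with rfl | hmem
    · dsimp only at hc2 hc3 h1 h2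
      rcases Nat.lt_or_ge a x with ha | ha
      · rcases hc2 with hc2 | hc2
        · omega
        · right; exact μ.up_left_mem (by omega) h2 hc2
      · have hax : a = x := le_antisymm h1 ha
        rcases Nat.lt_or_ge b y with hb | hb
        · rcases hc3 with hc3 | hc3
          · omega
          · right; subst hax; exact μ.up_left_mem le_rfl (by omega) hc3
        · left; subst hax; rw [Prod.mk.injEq]; omega
    · right; exact μ.up_left_mem h1 h2 hmem

/-- Erase a removable cell from a Young diagram. -/
def eraseCell (μ : YoungDiagram) (c : ℕ × ℕ) (h : Rem μ c) : YoungDiagram where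
  cells := μ.cells.erase c
  isLowerSet := by
    rintro ⟨x, y⟩ ⟨a, b⟩ hle hmem
    obtain ⟨hc1, hc2, hc3⟩ := h
    simp only [Finset.coe_erase, Set.mem_diff, Set.mem_singleton_iff,
      YoungDiagram.mem_cells] at hmem ⊢
    obtain ⟨h1, h2⟩ : a ≤ x ∧ b ≤ y := hle
    obtain ⟨hm, hne⟩ := hmem
    refine ⟨μ.up_left_mem h1 h2 hm, ?_⟩
    rintro rfl
    dsimp only at hc2 hc3
    have hor : a < x ∨ (a = x ∧ b < y) := by
      by_contra hcon
      push_neg at hcon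
      exact hne (by rw [Prod.mk.injEq]; omega)
    rcases hor with h' | ⟨h', h''⟩
    · exact hc2 (μ.up_left_mem (by omega) h2 hm)
    · exact hc3 (μ.up_left_mem (by omega) (by omega) hm)

theorem cells_insertCell (μ : YoungDiagram) (c : ℕ × ℕ) (h : Addable μ c) :
    (insertCell μ c h).cells = insert c μ.cells := rfl

theorem cells_eraseCell (μ : YoungDiagram) (c : ℕ × ℕ) (h : Rem μ c) :
    (eraseCell μ c h).cells = μ.cells.erase c := rfl

theorem addBox_insertCell (μ : YoungDiagram) (c : ℕ × ℕ) (h : Addable μ c) :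
    AddBox μ (insertCell μ c h) := by
  constructor
  · rw [← YoungDiagram.cells_subset_iff, cells_insertCell]
    exact Finset.subset_insert _ _
  · show (insert c μ.cells).card = _
    rw [Finset.card_insert_of_notMem (fun hc => h.1 ((μ.mem_cells _).mp hc))]

theorem addBox_eraseCell (μ : YoungDiagram) (c : ℕ × ℕ) (h : Rem μ c) :
    AddBox (eraseCell μ c h) μ := by
  constructor
  · rw [← YoungDiagram.cells_subset_iff, cells_eraseCell]
    exact Finset.erase_subset _ _
  · show μ.cells.card = (μ.cells.erase c).card + 1
    rw [Finset.card_erase_of_mem ((μ.mem_cells _).mpr h.1)]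
    have : c ∈ μ.cells := (μ.mem_cells _).mpr h.1
    have := Finset.card_pos.mpr ⟨c, this⟩
    omega
open YoungDiagram in
theorem addBox_exists_rem {α μ : YoungDiagram} (h : AddBox α μ) :
    ∃ c, ∃ hc : Rem μ c, ∃ ha : Addable α c, α = eraseCell μ c hc ∧ μ = insertCell α c ha := by
  obtain ⟨hle, hcard⟩ := h
  have hsub : α.cells ⊆ μ.cells := YoungDiagram.cells_subset_iff.mpr hle
  have hcd : (μ.cells \ α.cells).card = 1 := by
    rw [Finset.card_sdiff_of_subset hsub]
    show μ.card - α.card = 1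
    omega
  obtain ⟨c, hc⟩ := Finset.card_eq_one.mp hcd
  have hcμ : c ∈ μ.cells := (Finset.mem_sdiff.mp (hc ▸ Finset.mem_singleton_self c)).1
  have hcα : c ∉ α.cells := (Finset.mem_sdiff.mp (hc ▸ Finset.mem_singleton_self c)).2
  have hcells : μ.cells = insert c α.cells := by
    have h1 : α.cells ∪ (μ.cells \ α.cells) = μ.cells := Finset.union_sdiff_of_subset hsub
    rw [← h1, hc]
    ext x
    simp [Finset.mem_union, Finset.mem_insert, or_comm]
  obtain ⟨i, j⟩ := c
  have hmem : ∀ x : ℕ × ℕ, x ∈ μ ↔ x = (i, j) ∨ x ∈ α := by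
    intro x
    rw [← μ.mem_cells, hcells, Finset.mem_insert, α.mem_cells]
  have hrem : Rem μ (i, j) := by
    refine ⟨(μ.mem_cells _).mp hcμ, ?_, ?_⟩ <;> dsimp only <;> intro hmm
    · rcases (hmem _).mp hmm with h' | h'
      · simp at h'
      · exact hcα (α.mem_cells _ |>.mpr (α.up_left_mem (Nat.le_succ i) le_rfl h'))
    · rcases (hmem _).mp hmm with h' | h'
      · simp at h'
      · exact hcα (α.mem_cells _ |>.mpr (α.up_left_mem le_rfl (Nat.le_succ j) h'))
  have hadd : Addable α (i, j) := by
    refine ⟨fun h' => hcα ((α.mem_cells _).mpr h'), ?_, ?_⟩ <;> dsimp only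
    · rcases Nat.eq_zero_or_pos i with hi | hi
      · exact Or.inl hi
      · right
        have : (i - 1, j) ∈ μ := μ.up_left_mem (by omega) le_rfl ((μ.mem_cells _).mp hcμ)
        rcases (hmem _).mp this with h' | h'
        · exfalso; rw [Prod.mk.injEq] at h'; omega
        · exact h'
    · rcases Nat.eq_zero_or_pos j with hj | hj
      · exact Or.inl hj
      · right
        have : (i, j - 1) ∈ μ := μ.up_left_mem le_rfl (by omega) ((μ.mem_cells _).mp hcμ)
        rcases (hmem _).mp this with h' | h'
        · exfalso; rw [Prod.mk.injEq] at h'; omega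
        · exact h'
  refine ⟨(i, j), hrem, hadd, ?_, ?_⟩
  · apply YoungDiagram.ext
    rw [cells_eraseCell, hcells, Finset.erase_insert (by exact hcα)]
  · apply YoungDiagram.ext
    rw [cells_insertCell, hcells]

/-- The set of row indices of removable corners of `μ`. -/
def remRows (μ : YoungDiagram) : Finset ℕ :=
  (Finset.range (μ.card + 1)).filter fun i => μ.rowLen (i + 1) < μ.rowLen i

theorem mem_remRows {μ : YoungDiagram} {i : ℕ} :
    i ∈ remRows μ ↔ μ.rowLen (i + 1) < μ.rowLen i := by
  rw [remRows, Finset.mem_filter, Finset.mem_range]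
  constructor
  · exact fun h => h.2
  · intro h
    exact ⟨by have := lt_card_of_rowLen_pos (μ := μ) (i := i) (by omega); omega, h⟩

/-- The set of row indices of addable cells of `μ`. -/
def addRows (μ : YoungDiagram) : Finset ℕ :=
  (Finset.range (μ.card + 2)).filter fun i => i = 0 ∨ μ.rowLen i < μ.rowLen (i - 1)

theorem mem_addRows {μ : YoungDiagram} {i : ℕ} :
    i ∈ addRows μ ↔ i = 0 ∨ μ.rowLen i < μ.rowLen (i - 1) := by
  rw [addRows, Finset.mem_filter, Finset.mem_range]
  constructor
  · exact fun h => h.2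
  · intro h
    refine ⟨?_, h⟩
    rcases h with h | h
    · omega
    · have := lt_card_of_rowLen_pos (μ := μ) (i := i - 1) (by omega)
      omega

theorem card_addRows (μ : YoungDiagram) : (addRows μ).card = (remRows μ).card + 1 := by
  have h : addRows μ = insert 0 ((remRows μ).image (· + 1)) := by
    ext k
    rw [mem_addRows, Finset.mem_insert, Finset.mem_image]
    constructor
    · rintro (h | h)
      · exact Or.inl h
      · rcases Nat.eq_zero_or_pos k with rfl | hk
        · simp at h
        · right
          refine ⟨k - 1, mem_remRows.mpr ?_, by omega⟩
          rw [show k - 1 + 1 = k by omega]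
          exact h
    · rintro (h | ⟨i, hi, rfl⟩)
      · exact Or.inl h
      · right
        rw [mem_remRows] at hi
        exact hi
  rw [h, Finset.card_insert_of_notMem (by simp), Finset.card_image_of_injective _ (fun a b hab => by simpa using hab)]

open YoungDiagram in
theorem rem_of_mem_remRows {μ : YoungDiagram} {i : ℕ} (hi : i ∈ remRows μ) :
    Rem μ (i, μ.rowLen i - 1) :=
  rem_iff.mpr ⟨by have := mem_remRows.mp hi; omega, mem_remRows.mp hi⟩

theorem addable_of_mem_addRows {μ : YoungDiagram} {i : ℕ} (hi : i ∈ addRows μ) :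
    Addable μ (i, μ.rowLen i) :=
  addable_iff.mpr ⟨rfl, mem_addRows.mp hi⟩

open YoungDiagram in
theorem nBox_eq_card_remRows (μ : YoungDiagram) : nBox μ = (remRows μ).card := by
  have hb : Function.Bijective
      (fun x : {i // i ∈ remRows μ} =>
        (⟨eraseCell μ (x.1, μ.rowLen x.1 - 1) (rem_of_mem_remRows x.2),
          addBox_eraseCell _ _ _⟩ : {α // AddBox α μ})) := by
    constructor
    · rintro ⟨i, hi⟩ ⟨i', hi'⟩ hE
      simp only [Subtype.mk.injEq] at hE ⊢
      by_contra hne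
      have hc : (i, μ.rowLen i - 1) ∈ μ.cells := (μ.mem_cells _).mpr
        (mem_iff_lt_rowLen.mpr (by have := mem_remRows.mp hi; omega))
      have h1 : (i, μ.rowLen i - 1) ∉
          (eraseCell μ (i, μ.rowLen i - 1) (rem_of_mem_remRows hi)).cells := by
        rw [cells_eraseCell]; exact Finset.notMem_erase _ _
      have h2 : (i, μ.rowLen i - 1) ∈
          (eraseCell μ (i', μ.rowLen i' - 1) (rem_of_mem_remRows hi')).cells := by
        rw [cells_eraseCell]
        refine Finset.mem_erase.mpr ⟨?_, hc⟩
        intro hcon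
        rw [Prod.mk.injEq] at hcon
        exact hne hcon.1
      rw [hE] at h1
      exact h1 h2
    · rintro ⟨α, hα⟩
      obtain ⟨⟨i, j⟩, hrem, -, hα', -⟩ := addBox_exists_rem hα
      have hij := rem_iff.mp hrem
      refine ⟨⟨i, mem_remRows.mpr hij.2⟩, ?_⟩
      simp only [Subtype.mk.injEq]
      have hj : μ.rowLen i - 1 = j := by omega
      rw [hα']
      congr 1
      rw [hj]
  rw [nBox, ← Nat.card_eq_of_bijective _ hb, Nat.card_eq_finsetCard]

open YoungDiagram in
theorem card_addBox_up (μ : YoungDiagram) :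
    Nat.card {ν : YoungDiagram // AddBox μ ν} = nBox μ + 1 := by
  have hb : Function.Bijective
      (fun x : {i // i ∈ addRows μ} =>
        (⟨insertCell μ (x.1, μ.rowLen x.1) (addable_of_mem_addRows x.2),
          addBox_insertCell _ _ _⟩ : {ν // AddBox μ ν})) := by
    constructor
    · rintro ⟨i, hi⟩ ⟨i', hi'⟩ hE
      simp only [Subtype.mk.injEq] at hE ⊢
      by_contra hne
      have h1 : (i, μ.rowLen i) ∈
          (insertCell μ (i, μ.rowLen i) (addable_of_mem_addRows hi)).cells := by
        rw [cells_insertCell]; exact Finset.mem_insert_self _ _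
      rw [hE, cells_insertCell, Finset.mem_insert] at h1
      rcases h1 with h1 | h1
      · rw [Prod.mk.injEq] at h1; exact hne h1.1
      · exact absurd (mem_iff_lt_rowLen.mp ((μ.mem_cells _).mp h1)) (by omega)
    · rintro ⟨ν, hν⟩
      obtain ⟨⟨i, j⟩, -, hadd, -, hν'⟩ := addBox_exists_rem hν
      have hij := addable_iff.mp hadd
      refine ⟨⟨i, mem_addRows.mpr hij.2⟩, ?_⟩
      simp only [Subtype.mk.injEq]
      rw [hν']
      congr 1
      rw [hij.1]
  rw [← Nat.card_eq_of_bijective _ hb, Nat.card_eq_finsetCard,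
    nBox_eq_card_remRows, card_addRows]
theorem yd_eq_of_le_of_card_le {μ ν : YoungDiagram} (h : μ ≤ ν) (hc : ν.card ≤ μ.card) :
    μ = ν :=
  YoungDiagram.ext (Finset.eq_of_subset_of_card_le (YoungDiagram.cells_subset_iff.mpr h) hc)

theorem card_inf_lt {μ ν : YoungDiagram} (h : μ ≠ ν) (hc : μ.card = ν.card) :
    (μ ⊓ ν).card < μ.card := by
  have hle : μ ⊓ ν ≤ μ := inf_le_left
  rcases Nat.lt_or_ge (μ ⊓ ν).card μ.card with h' | h'
  · exact h'
  · exfalso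
    have h1 : μ ⊓ ν = μ := yd_eq_of_le_of_card_le hle h'
    have h2 : μ ≤ ν := h1 ▸ inf_le_right
    exact h (yd_eq_of_le_of_card_le h2 (le_of_eq hc.symm))

/-- Uniqueness of the common sub-diagram obtained by removing a box from each of two
distinct diagrams of the same size. -/
theorem addBox_unique_sub {μ ν α β : YoungDiagram} (hμν : μ ≠ ν) (hc : μ.card = ν.card)
    (h1 : AddBox α μ) (h2 : AddBox α ν) (h3 : AddBox β μ) (h4 : AddBox β ν) : α = β := by
  have key : ∀ γ : YoungDiagram, AddBox γ μ → AddBox γ ν → γ = μ ⊓ ν := by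
    intro γ hg1 hg2
    have hle : γ ≤ μ ⊓ ν := le_inf hg1.1 hg2.1
    have hlt := card_inf_lt hμν hc
    exact yd_eq_of_le_of_card_le hle (by have := hg1.2; omega)
  rw [key α h1 h2, key β h3 h4]

/-- If two distinct diagrams can each have a box added to reach `μ`, then `μ` is their join
and their meet is obtained from each by removing a box. -/
theorem addBox_sup {α β μ : YoungDiagram} (hαβ : α ≠ β)
    (h1 : AddBox α μ) (h2 : AddBox β μ) :
    μ = α ⊔ β ∧ AddBox (α ⊓ β) α ∧ AddBox (α ⊓ β) β := by
  have hcc : α.card = β.card := by have := h1.2; have := h2.2; omega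
  have hie : (α ⊔ β).card + (α ⊓ β).card = α.card + β.card := by
    show (α.cells ∪ β.cells).card + (α.cells ∩ β.cells).card = _
    rw [Finset.card_union_add_card_inter]
  have hlt := card_inf_lt hαβ hcc
  have hsup : α ⊔ β ≤ μ := sup_le h1.1 h2.1
  have hμ : μ = α ⊔ β := (yd_eq_of_le_of_card_le hsup (by have := h1.2; omega)).symm
  have hsc : (α ⊔ β).card = α.card + 1 := by rw [← hμ]; exact h1.2
  refine ⟨hμ, ⟨inf_le_left, by omega⟩, ⟨inf_le_right, by omega⟩⟩

/-- If `MoveBox α β` then their join is obtained from each by adding a box. -/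
theorem moveBox_sup {α β : YoungDiagram} (h : MoveBox α β) :
    AddBox α (α ⊔ β) ∧ AddBox β (α ⊔ β) := by
  obtain ⟨hne, γ, hg1, hg2⟩ := h
  have hcc : α.card = β.card := by have := hg1.2; have := hg2.2; omega
  have hie : (α ⊔ β).card + (α ⊓ β).card = α.card + β.card := by
    show (α.cells ∪ β.cells).card + (α.cells ∩ β.cells).card = _
    rw [Finset.card_union_add_card_inter]
  have hlt := card_inf_lt hne hcc
  have hγ : γ = α ⊓ β :=
    yd_eq_of_le_of_card_le (le_inf hg1.1 hg2.1) (by have := hg1.2; omega)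
  have hγc : α.card = γ.card + 1 := hg1.2
  rw [hγ] at hγc
  exact ⟨⟨le_sup_left, by omega⟩, ⟨le_sup_right, by omega⟩⟩
theorem sum_indicator_eq_natCard {ι : Type*} [Fintype ι] (P : ι → Prop) [DecidablePred P] :
    (∑ x : ι, if P x then (1 : ℝ) else 0) = Nat.card {x // P x} := by
  rw [Finset.sum_boole, Nat.card_eq_fintype_card, Fintype.card_subtype]

open scoped Classical in
/-- The branching ("Bratteli") matrix between partitions of `N` and partitions of `N+1`. -/
noncomputable def Bmat (N : ℕ) : Matrix (PartLE N N) (PartLE (N + 1) (N + 1)) ℝ :=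
  fun α μ => if AddBox α.1 μ.1 then 1 else 0

theorem transpose_mul_Bmat (N : ℕ) : (Bmat N).transpose * Bmat N = MF (N + 1) (N + 1) := by
  classical
  ext μ ν
  rw [Matrix.mul_apply]
  have hterm : ∀ α : PartLE N N, (Bmat N).transpose μ α * Bmat N α ν =
      if AddBox α.1 μ.1 ∧ AddBox α.1 ν.1 then (1 : ℝ) else 0 := by
    intro α
    rw [Matrix.transpose_apply, Bmat, Bmat]
    split_ifs with h1 h2 h3 h3 h2 <;> simp_all
  rw [Finset.sum_congr rfl (fun α _ => hterm α), sum_indicator_eq_natCard]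
  by_cases hμν : μ = ν
  · subst hμν
    rw [MF, if_pos rfl]
    congr 1
    have he : {α : PartLE N N // AddBox α.1 μ.1 ∧ AddBox α.1 μ.1} ≃
        {α : YoungDiagram // AddBox α μ.1} :=
      { toFun := fun x => ⟨x.1.1, x.2.1⟩
        invFun := fun y => ⟨⟨y.1, by
          have := y.2.2; have := μ.2.1
          constructor
          · omega
          · exact le_trans (colLen0_le_card y.1) (by omega)⟩, y.2, y.2⟩
        left_inv := fun x => rfl
        right_inv := fun y => rfl }
    rw [Nat.card_congr he]
    rfl
  · rw [MF, if_neg hμν]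
    have hne : μ.1 ≠ ν.1 := fun h => hμν (Subtype.ext h)
    by_cases hmv : MoveBox μ.1 ν.1
    · rw [if_pos hmv]
      obtain ⟨-, γ, hg1, hg2⟩ := hmv
      have hγ : γ.card = N ∧ γ.colLen 0 ≤ N := by
        have := hg1.2; have := μ.2.1
        constructor
        · omega
        · exact le_trans (colLen0_le_card γ) (by omega)
      have : Nat.card {α : PartLE N N // AddBox α.1 μ.1 ∧ AddBox α.1 ν.1} = 1 := by
        rw [Nat.card_eq_one_iff_unique]
        constructor
        · constructor
          rintro ⟨α, hα1, hα2⟩ ⟨β, hβ1, hβ2⟩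
          have : α.1 = β.1 := addBox_unique_sub hne (by rw [μ.2.1, ν.2.1]) hα1 hα2 hβ1 hβ2
          exact Subtype.ext (Subtype.ext this)
        · exact ⟨⟨⟨γ, hγ⟩, hg1, hg2⟩⟩
      rw [this]
      norm_num
    · rw [if_neg hmv]
      have : IsEmpty {α : PartLE N N // AddBox α.1 μ.1 ∧ AddBox α.1 ν.1} := by
        constructor
        rintro ⟨α, hα1, hα2⟩
        exact hmv ⟨hne, α.1, hα1, hα2⟩
      rw [Nat.card_of_isEmpty]
      norm_num

theorem Bmat_mul_transpose (N : ℕ) : Bmat N * (Bmat N).transpose = MF N N + 1 := by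
  classical
  ext α β
  rw [Matrix.mul_apply]
  have hterm : ∀ μ : PartLE (N + 1) (N + 1), Bmat N α μ * (Bmat N).transpose μ β =
      if AddBox α.1 μ.1 ∧ AddBox β.1 μ.1 then (1 : ℝ) else 0 := by
    intro μ
    rw [Matrix.transpose_apply, Bmat, Bmat]
    split_ifs with h1 h2 h3 h3 h2 <;> simp_all
  rw [Finset.sum_congr rfl (fun μ _ => hterm μ), sum_indicator_eq_natCard]
  by_cases hαβ : α = β
  · subst hαβ
    rw [Matrix.add_apply, MF, if_pos rfl, Matrix.one_apply_eq]
    have he : {μ : PartLE (N + 1) (N + 1) // AddBox α.1 μ.1 ∧ AddBox α.1 μ.1} ≃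
        {μ : YoungDiagram // AddBox α.1 μ} :=
      { toFun := fun x => ⟨x.1.1, x.2.1⟩
        invFun := fun y => ⟨⟨y.1, by
          have := y.2.2; have := α.2.1
          constructor
          · omega
          · exact le_trans (colLen0_le_card y.1) (by omega)⟩, y.2, y.2⟩
        left_inv := fun x => rfl
        right_inv := fun y => rfl }
    rw [Nat.card_congr he, card_addBox_up]
    push_cast
    ring
  · rw [Matrix.add_apply, MF, if_neg hαβ, Matrix.one_apply_ne hαβ, add_zero]
    have hne : α.1 ≠ β.1 := fun h => hαβ (Subtype.ext h)
    by_cases hmv : MoveBox α.1 β.1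
    · rw [if_pos hmv]
      obtain ⟨ha, hb⟩ := moveBox_sup hmv
      have hs : (α.1 ⊔ β.1).card = N + 1 ∧ (α.1 ⊔ β.1).colLen 0 ≤ N + 1 := by
        have := ha.2; have := α.2.1
        constructor
        · omega
        · exact le_trans (colLen0_le_card _) (by omega)
      have : Nat.card {μ : PartLE (N + 1) (N + 1) // AddBox α.1 μ.1 ∧ AddBox β.1 μ.1} = 1 := by
        rw [Nat.card_eq_one_iff_unique]
        constructor
        · constructor
          rintro ⟨μ, hμ1, hμ2⟩ ⟨ν, hν1, hν2⟩
          have e1 : μ.1 = α.1 ⊔ β.1 := (addBox_sup hne hμ1 hμ2).1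
          have e2 : ν.1 = α.1 ⊔ β.1 := (addBox_sup hne hν1 hν2).1
          exact Subtype.ext (Subtype.ext (e1.trans e2.symm))
        · exact ⟨⟨⟨α.1 ⊔ β.1, hs⟩, ha, hb⟩⟩
      rw [this]
      norm_num
    · rw [if_neg hmv]
      have : IsEmpty {μ : PartLE (N + 1) (N + 1) // AddBox α.1 μ.1 ∧ AddBox β.1 μ.1} := by
        constructor
        rintro ⟨μ, hμ1, hμ2⟩
        obtain ⟨-, h2, h3⟩ := addBox_sup hne hμ1 hμ2
        exact hmv ⟨hne, α.1 ⊓ β.1, h2, h3⟩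
      rw [Nat.card_of_isEmpty]
      norm_num
open Polynomial in
/-- Rectangular version of `charpoly (A * B) = charpoly (B * A)`, up to powers of `X`. -/
theorem charpoly_mul_comm_rect {m n : Type*} [Fintype m] [Fintype n]
    [DecidableEq m] [DecidableEq n] (A : Matrix m n ℝ) (B : Matrix n m ℝ) :
    (A * B).charpoly * X ^ (Fintype.card n) = (B * A).charpoly * X ^ (Fintype.card m) := by
  classical
  set R := Polynomial ℝ
  set A' : Matrix m n R := A.map Polynomial.C with hA'
  set B' : Matrix n m R := B.map Polynomial.C with hB'
  set Xm : Matrix m m R := (X : R) • 1 with hXm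
  set Xn : Matrix n n R := (X : R) • 1 with hXn
  have hAX : A' * Xn = Xm * A' := by
    rw [hXn, hXm, Matrix.mul_smul, Matrix.smul_mul, Matrix.mul_one, Matrix.one_mul]
  have key : Matrix.fromBlocks Xm A' B' 1 * Matrix.fromBlocks 1 0 0 Xn =
      Matrix.fromBlocks Xm 0 0 (1 : Matrix n n R) * Matrix.fromBlocks 1 A' B' Xn := by
    rw [Matrix.fromBlocks_multiply, Matrix.fromBlocks_multiply]
    simp only [Matrix.mul_one, Matrix.one_mul, Matrix.mul_zero, Matrix.zero_mul,
      add_zero, zero_add, hAX]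
  have hdet := congrArg Matrix.det key
  rw [Matrix.det_mul, Matrix.det_mul] at hdet
  have d1 : (Matrix.fromBlocks Xm A' B' (1 : Matrix n n R)).det = (A * B).charpoly := by
    rw [Matrix.det_fromBlocks_one₂₂, Matrix.charpoly, Matrix.charmatrix]
    congr 1
    rw [Matrix.scalar_apply, ← Matrix.smul_one_eq_diagonal, RingHom.mapMatrix_apply,
      Matrix.map_mul]
  have d2 : (Matrix.fromBlocks (1 : Matrix m m R) A' B' Xn).det = (B * A).charpoly := by
    rw [Matrix.det_fromBlocks_one₁₁, Matrix.charpoly, Matrix.charmatrix]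
    congr 1
    rw [Matrix.scalar_apply, ← Matrix.smul_one_eq_diagonal, RingHom.mapMatrix_apply,
      Matrix.map_mul]
  have d3 : (Matrix.fromBlocks (1 : Matrix m m R) 0 0 Xn).det = X ^ (Fintype.card n) := by
    rw [Matrix.det_fromBlocks_zero₂₁, Matrix.det_one, one_mul, hXn, Matrix.det_smul,
      Matrix.det_one, mul_one]
  have d4 : (Matrix.fromBlocks Xm 0 0 (1 : Matrix n n R)).det = X ^ (Fintype.card m) := by
    rw [Matrix.det_fromBlocks_zero₂₁, Matrix.det_one, mul_one, hXm, Matrix.det_smul,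
      Matrix.det_one, mul_one]
  rw [d1, d3, d4, d2] at hdet
  rw [hdet, mul_comm]

open Polynomial in
/-- Shifting a matrix by the identity composes the characteristic polynomial with `X - 1`. -/
theorem charpoly_add_one {ι : Type*} [Fintype ι] [DecidableEq ι] (M : Matrix ι ι ℝ) :
    (M + 1).charpoly = Polynomial.aeval (X - 1 : Polynomial ℝ) M.charpoly := by
  have hmap : (Matrix.charmatrix M).map (Polynomial.aeval (X - 1 : Polynomial ℝ)).toRingHom =
      Matrix.charmatrix (M + 1) := by
    ext i j
    by_cases hij : i = j
    · subst hij
      simp only [Matrix.map_apply, Matrix.charmatrix_apply_eq, AlgHom.toRingHom_eq_coe,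
        RingHom.coe_coe, map_sub, Polynomial.aeval_X, Polynomial.aeval_C,
        Matrix.add_apply, Matrix.one_apply_eq]
      rw [Polynomial.algebraMap_eq (R := ℝ), map_add, Polynomial.C_1]
      ring
    · simp only [Matrix.map_apply, Matrix.charmatrix_apply_ne _ _ _ hij,
        AlgHom.toRingHom_eq_coe, RingHom.coe_coe, map_neg, Polynomial.aeval_C,
        Matrix.add_apply, Matrix.one_apply_ne hij, add_zero]
      rw [Polynomial.algebraMap_eq (R := ℝ)]
  rw [show (M + 1).charpoly = (Matrix.charmatrix (M + 1)).det from rfl,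
    show M.charpoly = (Matrix.charmatrix M).det from rfl, ← hmap]
  exact (RingHom.map_det (Polynomial.aeval (X - 1 : Polynomial ℝ)).toRingHom
    (Matrix.charmatrix M)).symm
open YoungDiagram in
theorem colLen0_eq {μ : YoungDiagram} {t : ℕ} (h : ∀ i, (i, 0) ∈ μ ↔ i < t) :
    μ.colLen 0 = t := by
  have h2 : ∀ i, i < μ.colLen 0 ↔ i < t := by
    intro i
    rw [← mem_iff_lt_colLen, h]
  by_contra hne
  rcases Nat.lt_or_ge (μ.colLen 0) t with h' | h'
  · exact absurd ((h2 _).mpr h') (lt_irrefl _)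
  · have ht : t < μ.colLen 0 := by omega
    exact absurd ((h2 _).mp ht) (lt_irrefl _)

open YoungDiagram in
theorem rowLen_eq {μ : YoungDiagram} {i t : ℕ} (h : ∀ j, (i, j) ∈ μ ↔ j < t) :
    μ.rowLen i = t := by
  have h2 : ∀ j, j < μ.rowLen i ↔ j < t := by
    intro j
    rw [← mem_iff_lt_rowLen, h]
  by_contra hne
  rcases Nat.lt_or_ge (μ.rowLen i) t with h' | h'
  · exact absurd ((h2 _).mpr h') (lt_irrefl _)
  · have ht : t < μ.rowLen i := by omega
    exact absurd ((h2 _).mp ht) (lt_irrefl _)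

open YoungDiagram in
theorem mem_rowLens_iff {μ : YoungDiagram} {x : ℕ} :
    x ∈ μ.rowLens ↔ ∃ i < μ.colLen 0, μ.rowLen i = x := by
  simp [YoungDiagram.rowLens, List.mem_map, List.mem_range]

open YoungDiagram in
theorem botAddable (μ : YoungDiagram) : Addable μ (μ.colLen 0, 0) := by
  refine ⟨?_, ?_, Or.inl rfl⟩
  · rw [mem_iff_lt_colLen]
    exact lt_irrefl _
  · dsimp only
    rcases Nat.eq_zero_or_pos (μ.colLen 0) with h | h
    · exact Or.inl h
    · right
      rw [mem_iff_lt_colLen]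
      omega

/-- Append a row of length 1 at the bottom of a Young diagram. -/
def botIns (μ : YoungDiagram) : YoungDiagram := insertCell μ (μ.colLen 0, 0) (botAddable μ)

open YoungDiagram in
theorem mem_botIns {μ : YoungDiagram} {c : ℕ × ℕ} :
    c ∈ botIns μ ↔ c = (μ.colLen 0, 0) ∨ c ∈ μ := by
  rw [← (botIns μ).mem_cells, botIns, cells_insertCell, Finset.mem_insert, μ.mem_cells]

theorem card_botIns (μ : YoungDiagram) : (botIns μ).card = μ.card + 1 :=
  (addBox_insertCell μ _ (botAddable μ)).2

open YoungDiagram in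
theorem colLen0_botIns (μ : YoungDiagram) : (botIns μ).colLen 0 = μ.colLen 0 + 1 := by
  apply colLen0_eq
  intro i
  rw [mem_botIns, mem_iff_lt_colLen, Prod.mk.injEq]
  omega

open YoungDiagram in
theorem rowLen_botIns_last (μ : YoungDiagram) : (botIns μ).rowLen (μ.colLen 0) = 1 := by
  apply rowLen_eq
  intro j
  rw [mem_botIns, Prod.mk.injEq]
  constructor
  · rintro (⟨-, rfl⟩ | hm)
    · omega
    · exfalso
      have : (μ.colLen 0, 0) ∈ μ := μ.up_left_mem le_rfl (Nat.zero_le _) hm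
      rw [mem_iff_lt_colLen] at this
      omega
  · intro hj
    exact Or.inl ⟨rfl, by omega⟩

theorem notQ_botIns (μ : YoungDiagram) : ¬ (∀ x ∈ (botIns μ).rowLens, 2 ≤ x) := by
  intro h
  have h1 : (1 : ℕ) ∈ (botIns μ).rowLens := by
    rw [mem_rowLens_iff]
    exact ⟨μ.colLen 0, by rw [colLen0_botIns]; omega, rowLen_botIns_last μ⟩
  exact absurd (h 1 h1) (by omega)

open YoungDiagram in
theorem botIns_bijective (N : ℕ) :
    Function.Bijective (fun μ : {μ : YoungDiagram // μ.card = N} =>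
      (⟨botIns μ.1, by rw [card_botIns, μ.2], notQ_botIns μ.1⟩ :
        {ν : YoungDiagram // ν.card = N + 1 ∧ ¬ (∀ x ∈ ν.rowLens, 2 ≤ x)})) := by
  constructor
  · rintro ⟨μ, hμ⟩ ⟨μ', hμ'⟩ hE
    simp only [Subtype.mk.injEq] at hE ⊢
    have hcl : μ.colLen 0 = μ'.colLen 0 := by
      have c1 := colLen0_botIns μ
      have c2 := colLen0_botIns μ'
      rw [hE] at c1
      omega
    apply YoungDiagram.ext
    have h1 : (botIns μ).cells = insert (μ.colLen 0, 0) μ.cells := rfl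
    have h2 : (botIns μ').cells = insert (μ'.colLen 0, 0) μ'.cells := rfl
    have hni : (μ.colLen 0, 0) ∉ μ.cells := fun hc =>
      absurd (mem_iff_lt_colLen.mp ((μ.mem_cells _).mp hc)) (lt_irrefl _)
    have hni' : (μ'.colLen 0, 0) ∉ μ'.cells := fun hc =>
      absurd (mem_iff_lt_colLen.mp ((μ'.mem_cells _).mp hc)) (lt_irrefl _)
    have : insert (μ.colLen 0, 0) μ.cells = insert (μ'.colLen 0, 0) μ'.cells := by
      rw [← h1, ← h2, hE]
    rw [← Finset.erase_insert hni, ← Finset.erase_insert hni', this, hcl]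
  · rintro ⟨ν, hν, hQ⟩
    push_neg at hQ
    obtain ⟨x, hx, hx2⟩ := hQ
    have hxpos := ν.pos_of_mem_rowLens x hx
    have hx1 : x = 1 := by omega
    obtain ⟨i, hi, hrl⟩ := mem_rowLens_iff.mp hx
    set r := ν.colLen 0 with hr
    have hrpos : 0 < r := by omega
    have hlast : ν.rowLen (r - 1) = 1 := by
      have h1 : ν.rowLen (r - 1) ≤ ν.rowLen i := ν.rowLen_anti i (r - 1) (by omega)
      have h2 : 0 < ν.rowLen (r - 1) := by
        rw [← mem_iff_lt_rowLen (j := 0)]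
        rw [mem_iff_lt_colLen]
        omega
      omega
    have hrem : Rem ν (r - 1, 0) := by
      refine ⟨?_, ?_, ?_⟩ <;> dsimp -failIfUnchanged only
      · rw [mem_iff_lt_colLen]; omega
      · rw [mem_iff_lt_colLen]
        rw [show r - 1 + 1 = r by omega]
        exact lt_irrefl _
      · rw [mem_iff_lt_rowLen]
        omega
    set μ := eraseCell ν (r - 1, 0) hrem with hμdef
    have hcard : μ.card = N := by
      have hh := (addBox_eraseCell ν _ hrem).2
      rw [← hμdef] at hh
      omega
    refine ⟨⟨μ, hcard⟩, ?_⟩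
    simp only [Subtype.mk.injEq]
    have hclμ : μ.colLen 0 = r - 1 := by
      apply colLen0_eq
      intro k
      rw [show ((k, 0) ∈ μ) ↔ (k, 0) ∈ μ.cells from (μ.mem_cells _).symm]
      rw [hμdef, cells_eraseCell]
      simp only [Finset.mem_erase, ν.mem_cells, mem_iff_lt_colLen, Prod.mk.injEq, ne_eq,
        not_and, not_true_eq_false, ← hr]
      constructor
      · rintro ⟨h1, h2⟩
        rcases Nat.lt_or_ge k (r - 1) with h' | h'
        · exact h'
        · exact absurd (by omega : k = r - 1) h1
      · intro h
        exact ⟨fun hk => by omega, by omega⟩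
    apply YoungDiagram.ext
    have h1 : (botIns μ).cells = insert (μ.colLen 0, 0) μ.cells := rfl
    have hmem : (r - 1, 0) ∈ ν.cells := by
      rw [ν.mem_cells, mem_iff_lt_colLen]
      omega
    rw [h1, hclμ, hμdef, cells_eraseCell, Finset.insert_erase hmem]

instance finite_partAll (N : ℕ) : Finite {μ : YoungDiagram // μ.card = N} := by
  apply Finite.of_surjective (fun x : PartLE N N => (⟨x.1, x.2.1⟩ : {μ // μ.card = N}))
  rintro ⟨μ, hμ⟩
  exact ⟨⟨μ, hμ, le_trans (colLen0_le_card μ) (le_of_eq hμ)⟩, rfl⟩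

instance finite_partQ (N : ℕ) (P : YoungDiagram → Prop) :
    Finite {μ : YoungDiagram // μ.card = N ∧ P μ} :=
  Finite.of_injective (fun x => (⟨x.1, x.2.1⟩ : {μ : YoungDiagram // μ.card = N}))
    (fun a b hab => by
      apply Subtype.ext
      have := congrArg Subtype.val hab
      simpa using this)

theorem card_PartLE (N : ℕ) :
    Fintype.card (PartLE N N) = Nat.card {μ : YoungDiagram // μ.card = N} := by
  rw [← Nat.card_eq_fintype_card]
  apply Nat.card_congr
  exact { toFun := fun x => ⟨x.1, x.2.1⟩
          invFun := fun y => ⟨y.1, y.2, le_trans (colLen0_le_card y.1) (le_of_eq y.2)⟩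
          left_inv := fun x => rfl
          right_inv := fun y => rfl }

open scoped Classical in
theorem partition_split (N : ℕ) :
    Nat.card {μ : YoungDiagram // μ.card = N + 1} =
      Nat.card {γ : YoungDiagram // γ.card = N + 1 ∧ ∀ x ∈ γ.rowLens, 2 ≤ x} +
        Nat.card {μ : YoungDiagram // μ.card = N} := by
  have e1 : {x : {μ : YoungDiagram // μ.card = N + 1} // (∀ y ∈ x.1.rowLens, 2 ≤ y)} ⊕
      {x : {μ : YoungDiagram // μ.card = N + 1} // ¬ (∀ y ∈ x.1.rowLens, 2 ≤ y)} ≃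
      {μ : YoungDiagram // μ.card = N + 1} :=
    Equiv.sumCompl _
  rw [← Nat.card_congr e1, Nat.card_sum]
  congr 1
  · exact Nat.card_congr (Equiv.subtypeSubtypeEquivSubtypeInter
      (fun μ : YoungDiagram => μ.card = N + 1) (fun μ => ∀ y ∈ μ.rowLens, 2 ≤ y))
  · rw [Nat.card_congr (Equiv.subtypeSubtypeEquivSubtypeInter
      (fun μ : YoungDiagram => μ.card = N + 1) (fun μ => ¬ (∀ y ∈ μ.rowLens, 2 ≤ y)))]
    exact (Nat.card_eq_of_bijective _ (botIns_bijective N)).symm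
theorem card_bot : (⊥ : YoungDiagram).card = 0 := by
  show (⊥ : YoungDiagram).cells.card = 0
  rw [YoungDiagram.cells_bot]
  rfl

theorem eq_bot_of_card_zero {μ : YoungDiagram} (h : μ.card = 0) : μ = ⊥ := by
  apply YoungDiagram.ext
  rw [YoungDiagram.cells_bot]
  exact Finset.card_eq_zero.mp h

theorem rowLens_bot : (⊥ : YoungDiagram).rowLens = [] := by
  have hcl : (⊥ : YoungDiagram).colLen 0 = 0 := by
    have := colLen0_le_card (⊥ : YoungDiagram)
    rw [card_bot] at this
    omega
  rw [YoungDiagram.rowLens, hcl]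
  rfl

theorem nBox_bot : nBox ⊥ = 0 := by
  have : IsEmpty {α : YoungDiagram // AddBox α ⊥} := by
    constructor
    rintro ⟨α, -, hc⟩
    rw [card_bot] at hc
    omega
  rw [nBox, Nat.card_of_isEmpty]

open Polynomial in
theorem charpoly_MF_aux (N : ℕ) :
    (MF N N).charpoly =
      ∏ k ∈ Finset.range (N + 1),
        (Polynomial.X - Polynomial.C (k : ℝ)) ^
          Nat.card {γ : YoungDiagram // γ.card = N - k ∧ ∀ x ∈ γ.rowLens, 2 ≤ x} := by
  induction N with
  | zero =>
    letI hu : Unique (PartLE 0 0) :=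
      { default := ⟨⊥, card_bot, by
          have := colLen0_le_card (⊥ : YoungDiagram); rw [card_bot] at this; exact this⟩
        uniq := fun x => Subtype.ext (eq_bot_of_card_zero x.2.1) }
    letI hu2 : Unique {γ : YoungDiagram // γ.card = 0 - 0 ∧ ∀ x ∈ γ.rowLens, 2 ≤ x} :=
      { default := ⟨⊥, card_bot, by rw [rowLens_bot]; intro x hx; simp at hx⟩
        uniq := fun x => Subtype.ext (eq_bot_of_card_zero x.2.1) }
    have hdef : (default : PartLE 0 0).1 = ⊥ := rfl
    have hMF : MF 0 0 default default = ((nBox (⊥ : YoungDiagram) : ℕ) : ℝ) := by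
      rw [MF, if_pos rfl, hdef]
    rw [show (MF 0 0).charpoly = (Matrix.charmatrix (MF 0 0)).det from rfl,
      Matrix.det_unique, Matrix.charmatrix_apply_eq, hMF, nBox_bot,
      Finset.prod_range_one, Nat.card_unique]
    norm_num
  | succ n ih =>
    have h1 := charpoly_mul_comm_rect (Bmat n) (Bmat n).transpose
    rw [Bmat_mul_transpose, transpose_mul_Bmat, charpoly_add_one, ih] at h1
    have h2 : Polynomial.aeval (X - 1 : Polynomial ℝ)
        (∏ k ∈ Finset.range (n + 1), (X - C (k : ℝ)) ^
          Nat.card {γ : YoungDiagram // γ.card = n - k ∧ ∀ x ∈ γ.rowLens, 2 ≤ x}) =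
        ∏ k ∈ Finset.range (n + 1), ((X - 1) - C (k : ℝ)) ^
          Nat.card {γ : YoungDiagram // γ.card = n - k ∧ ∀ x ∈ γ.rowLens, 2 ≤ x} := by
      rw [map_prod]
      refine Finset.prod_congr rfl (fun k _ => ?_)
      rw [map_pow, map_sub, Polynomial.aeval_X, Polynomial.aeval_C, Polynomial.algebraMap_eq]
    rw [h2] at h1
    -- h1 : (∏ ...) * X ^ p(n+1) = (MF (n+1) (n+1)).charpoly * X ^ p(n)
    apply mul_right_cancel₀ (b := (X : Polynomial ℝ) ^ Fintype.card (PartLE n n))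
      (pow_ne_zero _ Polynomial.X_ne_zero)
    rw [← h1]
    -- now: RHS-goal * X^{p n} = (∏ shifted)^ * X^{p (n+1)}
    have h3 : ∏ k ∈ Finset.range (n + 1 + 1), (X - C (k : ℝ)) ^
          Nat.card {γ : YoungDiagram // γ.card = n + 1 - k ∧ ∀ x ∈ γ.rowLens, 2 ≤ x} =
        (∏ k ∈ Finset.range (n + 1), (X - C ((k + 1 : ℕ) : ℝ)) ^
          Nat.card {γ : YoungDiagram // γ.card = n + 1 - (k + 1) ∧ ∀ x ∈ γ.rowLens, 2 ≤ x}) *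
        (X - C ((0 : ℕ) : ℝ)) ^
          Nat.card {γ : YoungDiagram // γ.card = n + 1 - 0 ∧ ∀ x ∈ γ.rowLens, 2 ≤ x} :=
      Finset.prod_range_succ' _ _
    have h4 : ∀ k : ℕ, (X - C ((k + 1 : ℕ) : ℝ)) = ((X - 1) - C (k : ℝ)) := by
      intro k
      rw [Nat.cast_add, Nat.cast_one, map_add, map_one]
      ring
    have h5 : ∀ k : ℕ, Nat.card {γ : YoungDiagram //
          γ.card = n + 1 - (k + 1) ∧ ∀ x ∈ γ.rowLens, 2 ≤ x} =
        Nat.card {γ : YoungDiagram // γ.card = n - k ∧ ∀ x ∈ γ.rowLens, 2 ≤ x} := by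
      intro k
      congr 2
      ext γ
      rw [Nat.add_sub_add_right]
    have h6 : Nat.card {γ : YoungDiagram // γ.card = n + 1 - 0 ∧ ∀ x ∈ γ.rowLens, 2 ≤ x} +
        Fintype.card (PartLE n n) = Fintype.card (PartLE (n + 1) (n + 1)) := by
      rw [card_PartLE, card_PartLE, partition_split n]
      rfl
    have h7 : (∏ k ∈ Finset.range (n + 1), (X - C ((k + 1 : ℕ) : ℝ)) ^
          Nat.card {γ : YoungDiagram // γ.card = n + 1 - (k + 1) ∧ ∀ x ∈ γ.rowLens, 2 ≤ x}) =
        ∏ k ∈ Finset.range (n + 1), ((X - 1) - C (k : ℝ)) ^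
          Nat.card {γ : YoungDiagram // γ.card = n - k ∧ ∀ x ∈ γ.rowLens, 2 ≤ x} :=
      Finset.prod_congr rfl (fun k _ => by rw [h4 k, h5 k])
    rw [h3, h7, Nat.cast_zero, map_zero, sub_zero, mul_assoc, ← pow_add, h6]

/-- For every `N ≥ 2`, the characteristic polynomial of `M_F(N)` equals
`∏_{k=0}^{N} (x - k)^{m_k}`, where `m_k` is the number of partitions of `N - k` all of whose
parts are at least `2`. -/
theorem charpoly_MF (N : ℕ) (hN : 2 ≤ N) :
    (MF N N).charpoly =
      ∏ k ∈ Finset.range (N + 1),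
        (Polynomial.X - Polynomial.C (k : ℝ)) ^
          Nat.card {γ : YoungDiagram // γ.card = N - k ∧ ∀ x ∈ γ.rowLens, 2 ≤ x} :=
  charpoly_MF_aux N
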